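/- On the complete graph with N ≥ 2 vertices, with Laplacian Δf(x) = (1/(N-1)) Σ_{y≠x} (f(y)-f(x)) and the discrete metric d(x,y)=1_{x≠y}, the Ricci curvature at every pair (x,y) with x≠y equals N/(N-1); that is, for all t ≥ 0 and x≠y, ‖P_t(x,·)-P_t(y,·)‖_{TV} ≤ e^{-Nt/(N-1)}, and N/(N-1) is the largest constant for which this holds. -/

import Mathlib

/-- A coupling of two nonnegative measures (densities) with prescribed marginals. -/
def IsCoupling {S : Type*} (p q : S → ℝ) (π : S × S → ℝ) : Prop :=
  (∀ z, 0 ≤ π z) ∧ Summable π ∧ (∀ x, ∑' y, π (x, y) = p x) ∧ (∀ y, ∑' x, π (x, y) = q y)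

/-- Optimal transport cost. -/
noncomputable def Tcost {S : Type*} (c : S → S → ℝ) (p q : S → ℝ) : ℝ :=
  sInf {r : ℝ | ∃ π, IsCoupling p q π ∧ r = ∑' z : S × S, c z.1 z.2 * π z}

lemma exp_smul_idem {S : Type*} [Fintype S] [DecidableEq S] (c : ℝ) (P : Matrix S S ℝ)
    (hP : P * P = P) :
    NormedSpace.exp (c • P) = 1 + (Real.exp c - 1) • P := by
  letI : SeminormedRing (Matrix S S ℝ) := Matrix.linftyOpSemiNormedRing
  letI : NormedRing (Matrix S S ℝ) := Matrix.linftyOpNormedRing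
  letI : NormedAlgebra ℝ (Matrix S S ℝ) := Matrix.linftyOpNormedAlgebra
  have hPn : ∀ n : ℕ, P ^ (n + 1) = P := by
    intro n
    induction n with
    | zero => simp
    | succ k ih => rw [pow_succ, ih, hP]
  have hsum := NormedSpace.expSeries_summable' (𝕂 := ℝ) (c • P)
  have hterm : ∀ n : ℕ, ((Nat.factorial (n + 1) : ℝ))⁻¹ • (c • P) ^ (n + 1)
      = (c ^ (n + 1) / (Nat.factorial (n + 1) : ℝ)) • P := by
    intro n
    rw [smul_pow, hPn, smul_smul, div_eq_inv_mul]
  have hsreal := Real.summable_pow_div_factorial c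
  have hsreal' : Summable fun n : ℕ => c ^ (n + 1) / (Nat.factorial (n + 1) : ℝ) :=
    hsreal.comp_injective Nat.succ_injective
  have hexp : Real.exp c = 1 + ∑' n : ℕ, c ^ (n + 1) / (Nat.factorial (n + 1) : ℝ) := by
    have h0 : Real.exp c = ∑' n : ℕ, c ^ n / (Nat.factorial n : ℝ) := by
      rw [Real.exp_eq_exp_ℝ, NormedSpace.exp_eq_tsum_div]
    rw [h0, Summable.tsum_eq_zero_add hsreal]
    simp
  rw [NormedSpace.exp_eq_tsum (𝕂 := ℝ)]
  show (∑' n : ℕ, ((Nat.factorial n : ℝ))⁻¹ • (c • P) ^ n) = _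
  have hsum2 : Summable (fun n : ℕ => ((Nat.factorial n : ℝ))⁻¹ • (c • P) ^ n) := by exact hsum
  rw [Summable.tsum_eq_zero_add hsum2]
  simp only [pow_zero, Nat.factorial_zero, Nat.cast_one, inv_one, one_smul, hterm]
  rw [Summable.tsum_smul_const hsreal', hexp, add_sub_cancel_left]

/-- On the complete graph with `N ≥ 2` vertices, with Laplacian
`Δ f (x) = (1/(N-1)) ∑_{y ≠ x} (f y - f x)` and the discrete metric,
one has `‖P_t(x,·) - P_t(y,·)‖_TV ≤ exp (-N t/(N-1))` for all `t ≥ 0` and `x ≠ y`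
(total variation = W₁ for the discrete metric), and `N/(N-1)` is the largest
constant for which this exponential bound holds. -/
theorem stmt1 {S : Type*} [Fintype S] [DecidableEq S] (hS : 2 ≤ Fintype.card S) :
    let N : ℝ := Fintype.card S
    let Δ : Matrix S S ℝ := fun x y => if y = x then -1 else 1 / (N - 1)
    let d : S → S → ℝ := fun x y => if x = y then 0 else 1
    (∀ t : ℝ, 0 ≤ t → ∀ x y : S, x ≠ y →
        Tcost d (NormedSpace.exp (t • Δ) x) (NormedSpace.exp (t • Δ) y) ≤
          Real.exp (-(N / (N - 1)) * t)) ∧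
    ∀ κ : ℝ,
      (∀ t : ℝ, 0 ≤ t → ∀ x y : S, x ≠ y →
        Tcost d (NormedSpace.exp (t • Δ) x) (NormedSpace.exp (t • Δ) y) ≤
          Real.exp (-κ * t)) →
      κ ≤ N / (N - 1) := by
  intro N Δ d
  have hN : N = (Fintype.card S : ℝ) := rfl
  have hN2 : (2 : ℝ) ≤ N := by rw [hN]; exact_mod_cast hS
  have hN0 : (0 : ℝ) < N := by linarith
  have hN1 : (0 : ℝ) < N - 1 := by linarith
  have hNne : N ≠ 0 := ne_of_gt hN0
  have hN1ne : N - 1 ≠ 0 := ne_of_gt hN1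
  have hlam : 0 < N / (N - 1) := div_pos hN0 hN1
  have hΔ : ∀ a b : S, Δ a b = if b = a then -1 else 1 / (N - 1) := fun _ _ => rfl
  have hd : ∀ a b : S, d a b = if a = b then 0 else 1 := fun _ _ => rfl
  -- entrywise formula for the heat kernel
  have key : ∀ (t : ℝ) (a b : S), NormedSpace.exp (t • Δ) a b
      = (if b = a then Real.exp (-(N / (N - 1)) * t) else 0)
        + (1 - Real.exp (-(N / (N - 1)) * t)) / N := by
    intro t a b
    set J : Matrix S S ℝ := Matrix.of fun _ _ => (1 : ℝ) with hJ
    set Q : Matrix S S ℝ := 1 - N⁻¹ • J with hQdef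
    have hQab : ∀ a b : S, Q a b = (if b = a then 1 else 0) - N⁻¹ := by
      intro a b
      simp only [hQdef, Matrix.sub_apply, Matrix.smul_apply, Matrix.one_apply, hJ,
        Matrix.of_apply, smul_eq_mul, mul_one]
      congr 1
      simp [eq_comm]
    have hQ : Q * Q = Q := by
      ext i j
      simp only [Matrix.mul_apply, hQab]
      simp only [sub_mul, mul_sub, Finset.sum_sub_distrib, ite_mul, mul_ite, one_mul, mul_one,
        zero_mul, mul_zero, Finset.sum_ite_eq, Finset.sum_ite_eq', Finset.mem_univ, if_true,
        Finset.sum_const, Finset.card_univ, nsmul_eq_mul, ← hN]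
      have hNN : N * (N⁻¹ * N⁻¹) = N⁻¹ := by field_simp
      rw [hNN]
      ring
    have hdec : t • Δ = (-(N / (N - 1)) * t) • Q := by
      ext i j
      simp only [Matrix.smul_apply, hΔ, hQab, smul_eq_mul]
      by_cases h : j = i <;> simp only [h, if_true, if_false] <;> field_simp <;> ring
    rw [hdec, exp_smul_idem _ _ hQ]
    show (1 : Matrix S S ℝ) a b + _ = _
    simp only [Matrix.add_apply, Matrix.smul_apply, Matrix.one_apply, hQab, smul_eq_mul]
    by_cases h : b = a
    · subst h
      simp only [if_pos rfl]
      field_simp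
      rw [if_pos trivial, if_pos trivial]
      ring
    · rw [if_neg fun e => h e.symm, if_neg h]
      field_simp
      rw [if_neg h]
      ring
  -- abbreviations
  set lam : ℝ := N / (N - 1) with hlamdef
  have main : ∀ t : ℝ, 0 ≤ t → ∀ x y : S, x ≠ y →
      Tcost d (NormedSpace.exp (t • Δ) x) (NormedSpace.exp (t • Δ) y)
        ≤ Real.exp (-lam * t) ∧
      Real.exp (-lam * t) ≤
        Tcost d (NormedSpace.exp (t • Δ) x) (NormedSpace.exp (t • Δ) y) := by
    intro t ht x y hxy
    set E : ℝ := Real.exp (-lam * t) with hE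
    have hE0 : 0 ≤ E := (Real.exp_pos _).le
    have hE1 : E ≤ 1 := Real.exp_le_one_iff.mpr (by nlinarith)
    set c0 : ℝ := (1 - E) / N with hc0
    have hc00 : 0 ≤ c0 := div_nonneg (by linarith) hN0.le
    set p : S → ℝ := NormedSpace.exp (t • Δ) x with hp
    set q : S → ℝ := NormedSpace.exp (t • Δ) y with hq
    have hpa : ∀ a, p a = (if a = x then E else 0) + c0 := fun a => key t x a
    have hqa : ∀ a, q a = (if a = y then E else 0) + c0 := fun a => key t y a
    -- the explicit coupling
    set π : S × S → ℝ := fun z =>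
      (if z.2 = z.1 then c0 else 0) + (if z.1 = x ∧ z.2 = y then E else 0) with hπ
    have hπ0 : ∀ z, 0 ≤ π z := by
      intro z
      have : (0:ℝ) ≤ (if z.2 = z.1 then c0 else 0) := by positivity
      have : (0:ℝ) ≤ (if z.1 = x ∧ z.2 = y then E else 0) := by positivity
      simp only [hπ]; positivity
    have hcpl : IsCoupling p q π := by
      refine ⟨hπ0, (hasSum_fintype π).summable, ?_, ?_⟩
      · intro a
        rw [tsum_fintype]
        simp only [hπ]
        rw [Finset.sum_add_distrib, Finset.sum_ite_eq' Finset.univ a (fun _ => c0)]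
        by_cases h : a = x
        · subst h
          simp [hpa, add_comm]
        · simp [h, hpa]
      · intro b
        rw [tsum_fintype]
        simp only [hπ]
        rw [Finset.sum_add_distrib]
        have h1 : ∑ a : S, (if b = a then c0 else 0) = c0 := by
          rw [Finset.sum_ite_eq Finset.univ b (fun _ => c0)]; simp
        rw [h1]
        by_cases h : b = y
        · subst h
          simp [hqa, add_comm]
        · simp [h, hqa]
    have hcost : ∑' z : S × S, d z.1 z.2 * π z = E := by
      rw [tsum_fintype]
      have : ∀ z : S × S, d z.1 z.2 * π z = if z = (x, y) then E else 0 := by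
        rintro ⟨a, b⟩
        simp only [hd, hπ, Prod.mk.injEq]
        by_cases h1 : a = b
        · subst h1
          have hne : ¬ (a = x ∧ a = y) := by rintro ⟨rfl, rfl⟩; exact hxy rfl
          simp [hne]
        · have hba : ¬ b = a := fun e => h1 e.symm
          by_cases h2 : a = x ∧ b = y
          · obtain ⟨rfl, rfl⟩ := h2
            simp [h1, hba]
          · simp [h1, hba, h2]
      rw [Finset.sum_congr rfl fun z _ => this z]
      simp
    have hmem : E ∈ {r : ℝ | ∃ π', IsCoupling p q π' ∧ r = ∑' z : S × S, d z.1 z.2 * π' z} :=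
      ⟨π, hcpl, hcost.symm⟩
    have hlb : ∀ r ∈ {r : ℝ | ∃ π', IsCoupling p q π' ∧ r = ∑' z : S × S, d z.1 z.2 * π' z},
        E ≤ r := by
      rintro r ⟨π', ⟨hπ'0, _, hrow, hcol⟩, rfl⟩
      rw [tsum_fintype, Fintype.sum_prod_type]
      have hterm0 : ∀ a b : S, 0 ≤ d a b * π' (a, b) := by
        intro a b
        have : (0:ℝ) ≤ d a b := by rw [hd]; positivity
        exact mul_nonneg this (hπ'0 _)
      have hinner : ∀ a : S, 0 ≤ ∑ b : S, d a b * π' (a, b) :=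
        fun a => Finset.sum_nonneg fun b _ => hterm0 a b
      have h1 : ∑ b : S, d x b * π' (x, b) ≤ ∑ a : S, ∑ b : S, d a b * π' (a, b) :=
        Finset.single_le_sum (fun a _ => hinner a) (Finset.mem_univ x)
      have h2 : ∑ b : S, d x b * π' (x, b) = p x - π' (x, x) := by
        have : ∀ b : S, d x b * π' (x, b) = π' (x, b) - (if b = x then π' (x, x) else 0) := by
          intro b
          rw [hd]
          by_cases h : b = x
          · subst h; simp
          · simp [h, Ne.symm h]
        rw [Finset.sum_congr rfl fun b _ => this b, Finset.sum_sub_distrib,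
          Finset.sum_ite_eq' Finset.univ x (fun _ => π' (x, x))]
        simp [← hrow x, tsum_fintype]
      have h3 : π' (x, x) ≤ q x := by
        rw [← hcol x, tsum_fintype]
        exact Finset.single_le_sum (fun a _ => hπ'0 (a, x)) (Finset.mem_univ x)
      have h4 : p x - q x = E := by
        rw [hpa, hqa]
        simp [hxy]
      calc E = p x - q x := h4.symm
        _ ≤ p x - π' (x, x) := by linarith
        _ = ∑ b : S, d x b * π' (x, b) := h2.symm
        _ ≤ _ := h1
    constructor
    · exact csInf_le ⟨E, hlb⟩ hmem
    · exact le_csInf ⟨E, hmem⟩ hlb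
  constructor
  · intro t ht x y hxy
    exact (main t ht x y hxy).1
  · intro κ hκ
    obtain ⟨x, y, hxy⟩ := Fintype.exists_pair_of_one_lt_card (α := S) (by omega)
    have h1 := (main 1 zero_le_one x y hxy).2
    have h2 := hκ 1 zero_le_one x y hxy
    have := h1.trans h2
    have := Real.exp_le_exp.mp this
    linarith
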